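/- If a mixed chain complex A is semi-classical, then A admits non-commutative Hodge-to-de Rham degeneration data: there exists a deformation retract (i, p, h) of (A, d) onto its homology H(A) = (Ker d_n / d(A_{n+1}), 0) such that moreover Δ ∘ i = 0; in particular p ∘ (Δ ∘ h)^{m−1} ∘ Δ ∘ i = 0 for every m ≥ 1. -/

import Mathlib

section ShiftAux
variable {R : Type*} [Field R] {A : ℤ → Type*} [∀ n, AddCommGroup (A n)] [∀ n, Module R (A n)]

def castL {m m' : ℤ} (e : m = m') : A m →ₗ[R] A m' := e ▸ (LinearMap.id : A m →ₗ[R] A m)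

@[simp] lemma castL_rfl {m : ℤ} : (castL (rfl : m = m) : A m →ₗ[R] A m) = LinearMap.id := rfl

lemma S_succ_gen (X : ∀ n : ℤ, Submodule R (A (n+1))) {k n : ℤ} (e : k + 1 = n + 1) :
    Submodule.map (castL e) (X k) = X n := by
  obtain rfl : k = n := by omega
  rw [Subsingleton.elim e rfl, castL_rfl]
  exact Submodule.map_id _

lemma compl_shift_gen (Y : ∀ ν : ℤ, Submodule R (A ν)) (X : ∀ n : ℤ, Submodule R (A (n+1)))
    (hyp : ∀ n, IsCompl (Y (n+1)) (X n)) {k ν : ℤ} (e : k + 1 = ν) :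
    IsCompl (Y ν) (Submodule.map (castL e) (X k)) := by
  subst e
  rw [castL_rfl, Submodule.map_id]
  exact hyp k

end ShiftAux


/-- The degree-`(n+1)` piece of the `d`-homology of a mixed chain complex:
`H_{n+1}(A) = Ker d_{n+1} / Im d_{n+2}`.  Degrees are indexed so that
`d n : A (n+1) →ₗ A n`. -/
abbrev dHomology (K : Type*) [Field K] (A : ℤ → Type*)
    [∀ n, AddCommGroup (A n)] [∀ n, Module K (A n)]
    (d : ∀ n : ℤ, A (n + 1) →ₗ[K] A n) (n : ℤ) : Type _ :=
  ↥(LinearMap.ker (d n)) ⧸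
    Submodule.comap (LinearMap.ker (d n)).subtype (LinearMap.range (d (n + 1)))

/-- `Reach Δ h z w` holds exactly when `w = (Δ ∘ h)^k z` for some `k ≥ 0`;
it encodes the iterated composites `(Δ ∘ h)^{m−1}` elementwise. -/
inductive Reach (K : Type*) [Field K] (A : ℤ → Type*)
    [∀ n, AddCommGroup (A n)] [∀ n, Module K (A n)]
    (Δ : ∀ n : ℤ, A n →ₗ[K] A (n + 1)) (h : ∀ n : ℤ, A n →ₗ[K] A (n + 1)) :
    ∀ ⦃m : ℤ⦄, A m → ∀ ⦃m' : ℤ⦄, A m' → Prop where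
  | refl {m : ℤ} (z : A m) : Reach K A Δ h z z
  | step {m m' : ℤ} (z : A m) (w : A m') :
      Reach K A Δ h z w → Reach K A Δ h z (Δ (m' + 1) (h m' w))

set_option maxHeartbeats 1600000 in
/-- If a mixed chain complex `A` is semi-classical, then `A` admits
non-commutative Hodge-to-de Rham degeneration data: there is a deformation
retract `(i, p, h)` of `(A, d)` onto its homology `(H(A), 0)` such that
moreover `Δ ∘ i = 0`; in particular `p ∘ (Δ ∘ h)^{m−1} ∘ Δ ∘ i = 0` for every
`m ≥ 1` (the latter being expressed elementwise via `Reach`). -/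
theorem semiclassical_implies_ncHodgeDeRham
    (K : Type*) [Field K] [CharZero K] (A : ℤ → Type*)
    [∀ n, AddCommGroup (A n)] [∀ n, Module K (A n)]
    (d : ∀ n : ℤ, A (n + 1) →ₗ[K] A n) (Δ : ∀ n : ℤ, A n →ₗ[K] A (n + 1))
    (hd : ∀ n : ℤ, (d n).comp (d (n + 1)) = 0)
    (hΔ : ∀ n : ℤ, (Δ (n + 1)).comp (Δ n) = 0)
    (hdΔ : ∀ n : ℤ, (Δ n).comp (d n) + (d (n + 1)).comp (Δ (n + 1)) = 0)
    (hsc : ∀ n : ℤ, ∀ x : A (n + 1), d n x = 0 →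
      ∃ y : A (n + 1), d n y = 0 ∧ Δ (n + 1) y = 0 ∧
        x - y ∈ LinearMap.range (d (n + 1))) :
    ∃ (i : ∀ n : ℤ, dHomology K A d n →ₗ[K] A (n + 1))
      (p : ∀ n : ℤ, A (n + 1) →ₗ[K] dHomology K A d n)
      (h : ∀ n : ℤ, A n →ₗ[K] A (n + 1)),
      (∀ n : ℤ, (d n).comp (i n) = 0) ∧
      (∀ n : ℤ, (p n).comp (d (n + 1)) = 0) ∧
      (∀ n : ℤ, (p n).comp (i n) = LinearMap.id) ∧
      (∀ n : ℤ, LinearMap.id - (i n).comp (p n) =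
        (d (n + 1)).comp (h (n + 1)) + (h n).comp (d n)) ∧
      (∀ n : ℤ, (Δ (n + 1)).comp (i n) = 0) ∧
      (∀ (n : ℤ) (x : dHomology K A d n) (k : ℤ) (z : A (k + 1)),
        Reach K A Δ h (Δ (n + 1) (i n x)) z → p k z = 0) := by
  classical
  -- boundaries are cycles
  have hBZle : ∀ n : ℤ, LinearMap.range (d (n+1)) ≤ LinearMap.ker (d n) := by
    intro n x hx
    obtain ⟨y, rfl⟩ := hx
    have := LinearMap.ext_iff.mp (hd n) y
    simpa using this
  -- choose a complement of the cycles
  obtain ⟨C, hC⟩ : ∃ C : ∀ n : ℤ, Submodule K (A (n+1)),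
      ∀ n, IsCompl (LinearMap.ker (d n)) (C n) :=
    ⟨fun n => (Submodule.exists_isCompl (LinearMap.ker (d n))).choose,
     fun n => (Submodule.exists_isCompl (LinearMap.ker (d n))).choose_spec⟩
  -- choose harmonic representatives
  obtain ⟨Hc, hHcΔ, hHcZ, hHcdisj, hHcsup⟩ : ∃ Hc : ∀ n : ℤ, Submodule K (A (n+1)),
      (∀ n, Hc n ≤ LinearMap.ker (Δ (n+1))) ∧ (∀ n, Hc n ≤ LinearMap.ker (d n)) ∧
      (∀ n, Disjoint (Hc n) (LinearMap.range (d (n+1)))) ∧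
      (∀ n, Hc n ⊔ LinearMap.range (d (n+1)) = LinearMap.ker (d n)) := by
    have key : ∀ n : ℤ, ∃ Hcn : Submodule K (A (n+1)),
        Hcn ≤ LinearMap.ker (Δ (n+1)) ∧ Hcn ≤ LinearMap.ker (d n) ∧
        Disjoint Hcn (LinearMap.range (d (n+1))) ∧
        Hcn ⊔ LinearMap.range (d (n+1)) = LinearMap.ker (d n) := by
      intro n
      set W : Submodule K (A (n+1)) := LinearMap.ker (d n) ⊓ LinearMap.ker (Δ (n+1)) with hW
      obtain ⟨U, hU⟩ :=
        Submodule.exists_isCompl (Submodule.comap W.subtype (LinearMap.range (d (n+1))))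
      refine ⟨U.map W.subtype, ?_, ?_, ?_, ?_⟩
      · exact le_trans (Submodule.map_subtype_le W U) inf_le_right
      · exact le_trans (Submodule.map_subtype_le W U) inf_le_left
      · rw [Submodule.disjoint_def]
        rintro x ⟨u, hu, rfl⟩ hxB
        have humem : u ∈ Submodule.comap W.subtype (LinearMap.range (d (n+1))) := hxB
        have : u = 0 := Submodule.disjoint_def.mp hU.disjoint u humem hu
        simp [this]
      · apply le_antisymm
        · exact sup_le (le_trans (Submodule.map_subtype_le W U) inf_le_left) (hBZle n)
        · intro z hz
          obtain ⟨y, hdy, hΔy, hzy⟩ := hsc n z hz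
          have hyW : y ∈ W := ⟨hdy, hΔy⟩
          have htop : (⟨y, hyW⟩ : W) ∈
              Submodule.comap W.subtype (LinearMap.range (d (n+1))) ⊔ U := by
            rw [hU.codisjoint.eq_top]; trivial
          obtain ⟨b, hb, u, hu, hbu⟩ := Submodule.mem_sup.mp htop
          refine Submodule.mem_sup.mpr ⟨(u : A (n+1)), ⟨u, hu, rfl⟩,
            (b : A (n+1)) + (z - y), Submodule.add_mem _ hb hzy, ?_⟩
          have hcoe : (b : A (n+1)) + (u : A (n+1)) = y := by
            have := congrArg (Subtype.val) hbu
            simpa using this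
          have : (u : A (n+1)) + ((b : A (n+1)) + (z - y))
              = ((b : A (n+1)) + (u : A (n+1))) + (z - y) := by abel
          rw [this, hcoe]; abel
    choose Hc h1 h2 h3 h4 using key
    exact ⟨Hc, h1, h2, h3, h4⟩
  -- complement of boundaries at each successor level
  have hcomplZ : ∀ n : ℤ, IsCompl (LinearMap.range (d (n+1))) (Hc n ⊔ C n) := by
    intro n
    constructor
    · rw [Submodule.disjoint_def]
      intro x hxB hxHC
      obtain ⟨a, ha, c, hc, hac⟩ := Submodule.mem_sup.mp hxHC
      have hcZ : c ∈ LinearMap.ker (d n) := by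
        have : c = x - a := by rw [← hac]; abel
        rw [this]
        exact Submodule.sub_mem _ (hBZle n hxB) (hHcZ n ha)
      have hc0 : c = 0 := Submodule.disjoint_def.mp (hC n).disjoint c hcZ hc
      have hxa : x = a := by rw [← hac, hc0, add_zero]
      exact Submodule.disjoint_def.mp (hHcdisj n) x (hxa ▸ ha) hxB
    · rw [codisjoint_iff, ← sup_assoc, sup_comm (LinearMap.range (d (n+1))) (Hc n),
        hHcsup n]
      exact (hC n).codisjoint.eq_top
  -- the global complement family S and the projections
  have hScompl : ∀ ν : ℤ, IsCompl (LinearMap.range (d ν))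
      (Submodule.map (castL (show ν - 1 + 1 = ν by omega)) (Hc (ν-1) ⊔ C (ν-1))) :=
    fun ν => compl_shift_gen (fun ν => LinearMap.range (d ν)) (fun n => Hc n ⊔ C n)
      hcomplZ _
  have hSsucc : ∀ n : ℤ, Submodule.map
      (castL (show (n+1) - 1 + 1 = n+1 by omega)) (Hc ((n+1)-1) ⊔ C ((n+1)-1))
      = Hc n ⊔ C n :=
    fun n => S_succ_gen (fun k => Hc k ⊔ C k) _
  -- the section of d with values in C
  have hinj : ∀ ν : ℤ, Function.Injective ((d ν).comp (C ν).subtype) := by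
    intro ν
    rw [← LinearMap.ker_eq_bot]
    rw [Submodule.eq_bot_iff]
    intro c hc
    have hcZ : (c : A (ν+1)) ∈ LinearMap.ker (d ν) := hc
    have : (c : A (ν+1)) = 0 := Submodule.disjoint_def.mp (hC ν).disjoint _ hcZ c.2
    exact Subtype.ext this
  have hrange : ∀ ν : ℤ, LinearMap.range ((d ν).comp (C ν).subtype)
      = LinearMap.range (d ν) := by
    intro ν
    apply le_antisymm
    · rintro x ⟨c, rfl⟩
      exact ⟨(c : A (ν+1)), rfl⟩
    · rintro x ⟨y, rfl⟩
      have hy := Submodule.projection_add_projection_eq_self (hC ν) y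
      refine ⟨(C ν).linearProjOfIsCompl (LinearMap.ker (d ν)) (hC ν).symm y, ?_⟩
      have : d ν y = d ν ((LinearMap.ker (d ν)).linearProjOfIsCompl (C ν) (hC ν) y)
          + d ν ((C ν).linearProjOfIsCompl (LinearMap.ker (d ν)) (hC ν).symm y) := by
        rw [← map_add]; exact congrArg (d ν) hy.symm
      have hker : d ν ((LinearMap.ker (d ν)).linearProjOfIsCompl (C ν) (hC ν) y) = 0 :=
        ((LinearMap.ker (d ν)).linearProjOfIsCompl (C ν) (hC ν) y).2
      simp only [LinearMap.coe_comp, Function.comp_apply, Submodule.coe_subtype]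
      rw [this, hker, zero_add]
  let eC : ∀ ν : ℤ, ↥(C ν) ≃ₗ[K] ↥(LinearMap.range (d ν)) := fun ν =>
    (LinearEquiv.ofInjective ((d ν).comp (C ν).subtype) (hinj ν)).trans
      (LinearEquiv.ofEq _ _ (hrange ν))
  have heC : ∀ (ν : ℤ) (c : ↥(C ν)), ((eC ν c : ↥(LinearMap.range (d ν))) : A ν)
      = d ν (c : A (ν+1)) := by
    intro ν c
    simp [eC, LinearEquiv.trans_apply]
  -- the homotopy
  let h : ∀ ν : ℤ, A ν →ₗ[K] A (ν+1) := fun ν =>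
    (C ν).subtype ∘ₗ (eC ν).symm.toLinearMap ∘ₗ
      Submodule.linearProjOfIsCompl (LinearMap.range (d ν)) _ (hScompl ν)
  -- i and p
  have hcHZ : ∀ n : ℤ, IsCompl
      (Submodule.comap (LinearMap.ker (d n)).subtype (LinearMap.range (d (n+1))))
      (Submodule.comap (LinearMap.ker (d n)).subtype (Hc n)) := by
    intro n
    constructor
    · rw [Submodule.disjoint_def]
      intro u huB huH
      have : (u : A (n+1)) = 0 :=
        Submodule.disjoint_def.mp (hHcdisj n) _ huH huB
      exact Subtype.ext this
    · rw [codisjoint_iff, Submodule.eq_top_iff']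
      intro u
      have huZ : (u : A (n+1)) ∈ Hc n ⊔ LinearMap.range (d (n+1)) := by
        rw [hHcsup n]; exact u.2
      obtain ⟨a, ha, b, hb, hab⟩ := Submodule.mem_sup.mp huZ
      refine Submodule.mem_sup.mpr ⟨⟨b, hBZle n hb⟩, hb, ⟨a, hHcZ n ha⟩, ha, ?_⟩
      exact Subtype.ext (by simpa [add_comm] using hab)
  let e : ∀ n : ℤ, (dHomology K A d n) ≃ₗ[K]
      ↥(Submodule.comap (LinearMap.ker (d n)).subtype (Hc n)) := fun n =>
    Submodule.quotientEquivOfIsCompl _ _ (hcHZ n)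
  let i : ∀ n : ℤ, dHomology K A d n →ₗ[K] A (n+1) := fun n =>
    (LinearMap.ker (d n)).subtype ∘ₗ
      (Submodule.comap (LinearMap.ker (d n)).subtype (Hc n)).subtype ∘ₗ
      (e n).toLinearMap
  let p : ∀ n : ℤ, A (n+1) →ₗ[K] dHomology K A d n := fun n =>
    (Submodule.comap (LinearMap.ker (d n)).subtype (LinearMap.range (d (n+1)))).mkQ ∘ₗ
      Submodule.linearProjOfIsCompl (LinearMap.ker (d n)) (C n) (hC n)
  -- key computation for the homotopy: h ∘ d
  have hhd : ∀ (n : ℤ) (x : A (n+1)), h n (d n x) =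
      x - ((LinearMap.ker (d n)).linearProjOfIsCompl (C n) (hC n) x : A (n+1)) := by
    intro n x
    have hsum : (((LinearMap.ker (d n)).linearProjOfIsCompl (C n) (hC n) x : A (n+1)))
        + (((C n).linearProjOfIsCompl (LinearMap.ker (d n)) (hC n).symm x : A (n+1))) = x :=
      Submodule.projection_add_projection_eq_self (hC n) x
    have hdx : d n x = d n (((C n).linearProjOfIsCompl (LinearMap.ker (d n)) (hC n).symm x
        : A (n+1))) := by
      conv_lhs => rw [← hsum]
      rw [map_add]
      rw [LinearMap.mem_ker.mp ((LinearMap.ker (d n)).linearProjOfIsCompl (C n) (hC n) x).2,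
        zero_add]
    have hproj : Submodule.linearProjOfIsCompl (LinearMap.range (d n)) _ (hScompl n) (d n x)
        = ⟨d n x, ⟨x, rfl⟩⟩ :=
      Submodule.linearProjOfIsCompl_apply_left (hScompl n) ⟨d n x, ⟨x, rfl⟩⟩
    have hsymm : (eC n).symm ⟨d n x, ⟨x, rfl⟩⟩
        = (C n).linearProjOfIsCompl (LinearMap.ker (d n)) (hC n).symm x := by
      rw [LinearEquiv.symm_apply_eq]
      apply Subtype.ext
      rw [heC n]
      exact hdx
    simp only [h, LinearMap.comp_apply, LinearEquiv.coe_coe, Submodule.coe_subtype]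
    rw [hproj, hsymm, eq_sub_iff_add_eq']
    exact hsum
  -- key computation for the homotopy: d ∘ h
  have hdh : ∀ (n : ℤ) (x : A (n+1)), d (n+1) (h (n+1) x) =
      ((Submodule.linearProjOfIsCompl (LinearMap.range (d (n+1))) _ (hScompl (n+1)) x
        : ↥(LinearMap.range (d (n+1)))) : A (n+1)) := by
    intro n x
    simp only [h, LinearMap.comp_apply, LinearEquiv.coe_coe, Submodule.coe_subtype]
    rw [← heC (n+1), LinearEquiv.apply_symm_apply]
  -- Δ vanishes on the image of i
  have hΔi : ∀ (n : ℤ) (q : dHomology K A d n), Δ (n+1) (i n q) = 0 := by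
    intro n q
    have hmem : ((((e n q) : ↥(Submodule.comap (LinearMap.ker (d n)).subtype (Hc n)))
        : ↥(LinearMap.ker (d n))) : A (n+1)) ∈ Hc n := (e n q).2
    have := hHcΔ n hmem
    simpa [i] using this
  refine ⟨i, p, h, ?_, ?_, ?_, ?_, ?_, ?_⟩
  · -- d ∘ i = 0
    intro n
    apply LinearMap.ext; intro q
    simp only [i, LinearMap.comp_apply, LinearEquiv.coe_coe, Submodule.coe_subtype,
      LinearMap.zero_apply]
    exact ((e n q : ↥(Submodule.comap (LinearMap.ker (d n)).subtype (Hc n)))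
      : ↥(LinearMap.ker (d n))).2
  · -- p ∘ d = 0
    intro n
    apply LinearMap.ext; intro y
    simp only [p, LinearMap.comp_apply, LinearMap.zero_apply]
    have h1 : (LinearMap.ker (d n)).linearProjOfIsCompl (C n) (hC n) (d (n+1) y)
        = ⟨d (n+1) y, hBZle n ⟨y, rfl⟩⟩ :=
      Submodule.linearProjOfIsCompl_apply_left (hC n) ⟨d (n+1) y, hBZle n ⟨y, rfl⟩⟩
    rw [h1, Submodule.mkQ_apply, Submodule.Quotient.mk_eq_zero]
    exact ⟨y, rfl⟩
  · -- p ∘ i = id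
    intro n
    apply LinearMap.ext; intro q
    simp only [p, i, LinearMap.comp_apply, LinearEquiv.coe_coe, Submodule.coe_subtype,
      LinearMap.id_apply]
    have h1 : (LinearMap.ker (d n)).linearProjOfIsCompl (C n) (hC n)
        ((((e n q) : ↥(Submodule.comap (LinearMap.ker (d n)).subtype (Hc n)))
          : ↥(LinearMap.ker (d n))) : A (n+1))
        = ((e n q) : ↥(LinearMap.ker (d n))) :=
      Submodule.linearProjOfIsCompl_apply_left (hC n) _
    rw [h1]
    exact (e n).symm_apply_apply q
  · -- homotopy identity
    intro n
    apply LinearMap.ext; intro x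
    simp only [LinearMap.sub_apply, LinearMap.add_apply, LinearMap.comp_apply,
      LinearMap.id_apply]
    rw [hhd n x, hdh n x]
    have hsum : (((LinearMap.ker (d n)).linearProjOfIsCompl (C n) (hC n) x : A (n+1)))
        + (((C n).linearProjOfIsCompl (LinearMap.ker (d n)) (hC n).symm x : A (n+1))) = x :=
      Submodule.projection_add_projection_eq_self (hC n) x
    have htop : (LinearMap.ker (d n)).linearProjOfIsCompl (C n) (hC n) x ∈
        Submodule.comap (LinearMap.ker (d n)).subtype (LinearMap.range (d (n+1))) ⊔
        Submodule.comap (LinearMap.ker (d n)).subtype (Hc n) := by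
      rw [(hcHZ n).codisjoint.eq_top]; trivial
    obtain ⟨u, hu, v, hv, huv⟩ := Submodule.mem_sup.mp htop
    have huv' : (u : A (n+1)) + (v : A (n+1))
        = ((LinearMap.ker (d n)).linearProjOfIsCompl (C n) (hC n) x : A (n+1)) := by
      rw [← huv]; simp
    -- p n x = mk v
    have hp : p n x = Submodule.Quotient.mk v := by
      simp only [p, LinearMap.comp_apply]
      rw [← huv, map_add, Submodule.mkQ_apply, Submodule.mkQ_apply,
        (Submodule.Quotient.mk_eq_zero _).mpr hu, zero_add]
    -- i n (p n x) = v
    have hip : i n (p n x) = (v : A (n+1)) := by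
      rw [hp]
      simp only [i, LinearMap.comp_apply, LinearEquiv.coe_coe, Submodule.coe_subtype]
      have hev : (e n).symm (⟨v, hv⟩ : ↥(Submodule.comap (LinearMap.ker (d n)).subtype (Hc n)))
          = (Submodule.Quotient.mk v : dHomology K A d n) := rfl
      rw [← hev, LinearEquiv.apply_symm_apply]
    -- the S-projection of x is u
    have hprojS : ((Submodule.linearProjOfIsCompl (LinearMap.range (d (n+1))) _
        (hScompl (n+1)) x : ↥(LinearMap.range (d (n+1)))) : A (n+1)) = (u : A (n+1)) := by
      have hxdec : x = ((u : A (n+1))) + (((v : A (n+1)))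
          + (((C n).linearProjOfIsCompl (LinearMap.ker (d n)) (hC n).symm x : A (n+1)))) := by
        rw [← add_assoc, huv']
        rw [hsum]
      have hmemS : ((v : A (n+1)))
          + (((C n).linearProjOfIsCompl (LinearMap.ker (d n)) (hC n).symm x : A (n+1)))
          ∈ Submodule.map (castL (show (n+1) - 1 + 1 = n+1 by omega))
            (Hc ((n+1)-1) ⊔ C ((n+1)-1)) := by
        rw [hSsucc n]
        exact Submodule.add_mem _ (Submodule.mem_sup_left hv)
          (Submodule.mem_sup_right
            ((C n).linearProjOfIsCompl (LinearMap.ker (d n)) (hC n).symm x).2)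
      conv_lhs => rw [hxdec]
      rw [map_add]
      have h0 : Submodule.linearProjOfIsCompl (LinearMap.range (d (n+1))) _ (hScompl (n+1))
          (((v : A (n+1)))
          + (((C n).linearProjOfIsCompl (LinearMap.ker (d n)) (hC n).symm x : A (n+1)))) = 0 :=
        Submodule.projectionOnto_apply_of_mem_right (hScompl (n+1)) hmemS
      rw [h0]
      rw [add_zero]
      have := Submodule.linearProjOfIsCompl_apply_left (hScompl (n+1))
        (⟨(u : A (n+1)), hu⟩ : ↥(LinearMap.range (d (n+1))))
      exact congrArg Subtype.val this
    rw [hip, hprojS, ← huv']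
    abel
  · -- Δ ∘ i = 0
    intro n
    apply LinearMap.ext; intro q
    simpa using hΔi n q
  · -- the Reach condition
    intro n x k z hr
    have hzero : ∀ {m : ℤ} {z₀ : A m} {m' : ℤ} {w : A m'},
        Reach K A Δ h z₀ w → z₀ = 0 → w = 0 := by
      intro m z₀ m' w hr
      induction hr with
      | refl z => exact fun hz => hz
      | step z w _ ih => intro hz; rw [ih hz]; simp
    have hz0 : z = 0 := hzero hr (hΔi n x)
    rw [hz0, map_zero]
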